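/- Let d ≥ 3, let Ω ⊆ ℝ^d be open, and let σ : Ω → ℝ be C^∞. Define S(σ) := ‖∇σ‖² − (2/d)·σ·Δσ. Let k ≥ 1 be an integer with k ≠ d, and suppose there is a C^∞ function A : Ω → ℝ with S(σ)(x) = 1 + σ(x)^k · A(x) for all x ∈ Ω. Set f := −d·A/(2(d−k)(k+1)) and σ′ := σ + σ^(k+1) · f. Then there exists a C^∞ function A′ : Ω → ℝ such that S(σ′)(x) = 1 + σ(x)^(k+1) · A′(x) for all x ∈ Ω. -/

import Mathlib

/-- The Euclidean Laplacian of `f : ℝ^d → ℝ` at `x`: the trace of the second derivative. -/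
noncomputable def euclideanLaplacian {d : ℕ} (f : EuclideanSpace ℝ (Fin d) → ℝ)
    (x : EuclideanSpace ℝ (Fin d)) : ℝ :=
  ∑ i : Fin d, iteratedFDeriv ℝ 2 f x ![EuclideanSpace.single i 1, EuclideanSpace.single i 1]

/-- The flat-background singular Yamabe operator `S(σ) = ‖∇σ‖² - (2/d)·σ·Δσ`. -/
noncomputable def singularYamabeS {d : ℕ} (σ : EuclideanSpace ℝ (Fin d) → ℝ)
    (x : EuclideanSpace ℝ (Fin d)) : ℝ :=
  ‖gradient σ x‖ ^ 2 - (2 / (d : ℝ)) * σ x * euclideanLaplacian σ x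

lemma lap_eq_sum {d : ℕ} (u : EuclideanSpace ℝ (Fin d) → ℝ) (x : EuclideanSpace ℝ (Fin d)) :
    euclideanLaplacian u x
      = ∑ i : Fin d, fderiv ℝ (fderiv ℝ u) x (EuclideanSpace.single i 1)
          (EuclideanSpace.single i 1) := by
  unfold euclideanLaplacian
  simp [iteratedFDeriv_two_apply]

lemma grad_sq_sum {d : ℕ} (u : EuclideanSpace ℝ (Fin d) → ℝ) (x : EuclideanSpace ℝ (Fin d)) :
    ‖gradient u x‖ ^ 2 = ∑ i : Fin d, (fderiv ℝ u x (EuclideanSpace.single i 1)) ^ 2 := by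
  have h1 : ∀ i, gradient u x i = fderiv ℝ u x (EuclideanSpace.single i 1) := by
    intro i
    have h2 := InnerProductSpace.toDual_symm_apply (𝕜 := ℝ) (E := EuclideanSpace ℝ (Fin d))
        (y := fderiv ℝ u x) (x := EuclideanSpace.single i 1)
    rw [EuclideanSpace.inner_single_right] at h2
    simpa [gradient] using h2
  rw [← real_inner_self_eq_norm_sq, PiLp.inner_apply]
  simp [h1, RCLike.inner_apply, sq]

lemma fderiv_smooth_on {d : ℕ} {Ω : Set (EuclideanSpace ℝ (Fin d))} (hΩ : IsOpen Ω)
    {F : Type*} [NormedAddCommGroup F] [NormedSpace ℝ F]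
    {σ : EuclideanSpace ℝ (Fin d) → F} (hσ : ContDiffOn ℝ (⊤ : ℕ∞) σ Ω) :
    ContDiffOn ℝ (⊤ : ℕ∞) (fderiv ℝ σ) Ω :=
  hσ.fderiv_of_isOpen hΩ (by simp)

set_option maxHeartbeats 1000000 in
/-- Flat-background instance of the first part of Lemma 4.5: if `S(σ) = 1 + σᵏ·A` on `Ω`
with `1 ≤ k ≠ d`, then `σ' := σ + σ^(k+1)·f` with `f := -d·A/(2(d-k)(k+1))` satisfies
`S(σ') = 1 + σ^(k+1)·A'` on `Ω` for some smooth `A'`. -/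
theorem singular_yamabe_induction_step
    (d : ℕ) (hd : 3 ≤ d) (Ω : Set (EuclideanSpace ℝ (Fin d))) (hΩ : IsOpen Ω)
    (σ A : EuclideanSpace ℝ (Fin d) → ℝ)
    (hσ : ContDiffOn ℝ (⊤ : ℕ∞) σ Ω) (hA : ContDiffOn ℝ (⊤ : ℕ∞) A Ω)
    (k : ℕ) (hk : 1 ≤ k) (hkd : k ≠ d)
    (h : ∀ x ∈ Ω, singularYamabeS σ x = 1 + σ x ^ k * A x) :
    ∃ A' : EuclideanSpace ℝ (Fin d) → ℝ, ContDiffOn ℝ (⊤ : ℕ∞) A' Ω ∧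
      ∀ x ∈ Ω,
        singularYamabeS
          (fun z => σ z + σ z ^ (k + 1) *
            (-((d : ℝ) * A z) / (2 * ((d : ℝ) - (k : ℝ)) * ((k : ℝ) + 1)))) x
        = 1 + σ x ^ (k + 1) * A' x := by
  obtain ⟨j, rfl⟩ : ∃ j, k = j + 1 := ⟨k - 1, (Nat.succ_pred_eq_of_pos hk).symm⟩
  have hd0 : (d : ℝ) ≠ 0 := Nat.cast_ne_zero.mpr (by omega)
  have hdk : (d : ℝ) - ((j : ℝ) + 1) ≠ 0 := by
    have : ((j : ℝ) + 1) ≠ (d : ℝ) := by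
      intro hh
      exact hkd (by exact_mod_cast hh)
    intro hh
    exact this (by linarith)
  have hj2 : ((j : ℝ) + 1 + 1) ≠ 0 := by positivity
  -- the constant in the correction term
  obtain ⟨c, hcdef⟩ : ∃ c : ℝ, c = -(d : ℝ) / (2 * ((d : ℝ) - ((j : ℝ) + 1)) * ((j : ℝ) + 1 + 1)) := ⟨_, rfl⟩
  -- the corrected defining function
  set σ' : EuclideanSpace ℝ (Fin d) → ℝ := fun z => σ z + σ z ^ (j + 2) * (c * A z) with hσ'def
  -- derivative component functions
  obtain ⟨Gf, hGf⟩ : ∃ Gf : EuclideanSpace ℝ (Fin d) → ℝ, Gf =    fun z => ∑ i : Fin d, (fderiv ℝ σ z (EuclideanSpace.single i 1)) ^ 2 := ⟨_, rfl⟩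
  obtain ⟨Pf, hPf⟩ : ∃ Pf : EuclideanSpace ℝ (Fin d) → ℝ, Pf =    fun z => ∑ i : Fin d,
      fderiv ℝ σ z (EuclideanSpace.single i 1) * fderiv ℝ A z (EuclideanSpace.single i 1) := ⟨_, rfl⟩
  obtain ⟨Rf, hRf⟩ : ∃ Rf : EuclideanSpace ℝ (Fin d) → ℝ, Rf =    fun z => ∑ i : Fin d, (fderiv ℝ A z (EuclideanSpace.single i 1)) ^ 2 := ⟨_, rfl⟩
  obtain ⟨Lf, hLf⟩ : ∃ Lf : EuclideanSpace ℝ (Fin d) → ℝ, Lf =    fun z => ∑ i : Fin d, fderiv ℝ (fderiv ℝ σ) z (EuclideanSpace.single i 1)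
      (EuclideanSpace.single i 1) := ⟨_, rfl⟩
  obtain ⟨Mf, hMf⟩ : ∃ Mf : EuclideanSpace ℝ (Fin d) → ℝ, Mf =    fun z => ∑ i : Fin d, fderiv ℝ (fderiv ℝ A) z (EuclideanSpace.single i 1)
      (EuclideanSpace.single i 1) := ⟨_, rfl⟩
  -- smoothness of component functions
  have hDσ : ContDiffOn ℝ (⊤ : ℕ∞) (fderiv ℝ σ) Ω := fderiv_smooth_on hΩ hσ
  have hDA : ContDiffOn ℝ (⊤ : ℕ∞) (fderiv ℝ A) Ω := fderiv_smooth_on hΩ hA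
  have hD2σ : ContDiffOn ℝ (⊤ : ℕ∞) (fderiv ℝ (fderiv ℝ σ)) Ω := fderiv_smooth_on hΩ hDσ
  have hD2A : ContDiffOn ℝ (⊤ : ℕ∞) (fderiv ℝ (fderiv ℝ A)) Ω := fderiv_smooth_on hΩ hDA
  have hGfs : ContDiffOn ℝ (⊤ : ℕ∞) Gf Ω := by
    rw [hGf]; exact ContDiffOn.sum fun i _ => (hDσ.clm_apply contDiffOn_const).pow 2
  have hPfs : ContDiffOn ℝ (⊤ : ℕ∞) Pf Ω := by
    rw [hPf]
    exact ContDiffOn.sum fun i _ =>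
      (hDσ.clm_apply contDiffOn_const).mul (hDA.clm_apply contDiffOn_const)
  have hRfs : ContDiffOn ℝ (⊤ : ℕ∞) Rf Ω := by
    rw [hRf]; exact ContDiffOn.sum fun i _ => (hDA.clm_apply contDiffOn_const).pow 2
  have hLfs : ContDiffOn ℝ (⊤ : ℕ∞) Lf Ω := by
    rw [hLf]
    exact ContDiffOn.sum fun i _ =>
      ((hD2σ.clm_apply contDiffOn_const).clm_apply contDiffOn_const)
  have hMfs : ContDiffOn ℝ (⊤ : ℕ∞) Mf Ω := by
    rw [hMf]
    exact ContDiffOn.sum fun i _ =>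
      ((hD2A.clm_apply contDiffOn_const).clm_apply contDiffOn_const)
  -- the new error term
  refine ⟨fun z =>
    -(σ z ^ j) * A z ^ 2
    - 2 / (d : ℝ) * A z * Lf z
    - 2 * ((j : ℝ) + 3) / (d : ℝ) * (c * A z) * Lf z
    + (2 - 4 * ((j : ℝ) + 2) / (d : ℝ)) * (c * Pf z)
    - 2 / (d : ℝ) * σ z * (c * Mf z)
    + σ z ^ j * (((j : ℝ) + 2) ^ 2 * (c * A z) ^ 2 * Gf z
        + 2 * ((j : ℝ) + 2) * (c * A z) * σ z * (c * Pf z)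
        + σ z ^ 2 * c ^ 2 * Rf z
        - 2 / (d : ℝ) * (c * A z) * (((j : ℝ) + 2) * ((j : ℝ) + 1) * Gf z * (c * A z)
            + σ z * (((j : ℝ) + 2) * Lf z * (c * A z)
                + 2 * ((j : ℝ) + 2) * c * Pf z + σ z * c * Mf z))), ?_, ?_⟩
  · fun_prop
  · -- rewrite the function in the goal as σ'
    have hfeq : (fun z => σ z + σ z ^ (j + 1 + 1) *
        (-((d : ℝ) * A z) / (2 * ((d : ℝ) - ((j + 1 : ℕ) : ℝ)) * (((j + 1 : ℕ) : ℝ) + 1)))) = σ' := by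
      funext z
      rw [hσ'def, hcdef]
      push_cast
      ring
    rw [hfeq]
    intro x hx
    have hmem : Ω ∈ nhds x := hΩ.mem_nhds hx
    -- pointwise derivatives
    have hder : ∀ z ∈ Ω, HasFDerivAt σ (fderiv ℝ σ z) z := fun z hz =>
      (((hσ z hz).contDiffAt (hΩ.mem_nhds hz)).differentiableAt (by simp)).hasFDerivAt
    have hderA : ∀ z ∈ Ω, HasFDerivAt A (fderiv ℝ A z) z := fun z hz =>
      (((hA z hz).contDiffAt (hΩ.mem_nhds hz)).differentiableAt (by simp)).hasFDerivAt
    -- first derivative of σ'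
    obtain ⟨Φ, hΦdef⟩ : ∃ Φ : EuclideanSpace ℝ (Fin d) → (EuclideanSpace ℝ (Fin d) →L[ℝ] ℝ), Φ = fun z =>
      (1 + ((j : ℝ) + 2) * σ z ^ (j + 1) * (c * A z)) • fderiv ℝ σ z
        + (σ z ^ (j + 2) * c) • fderiv ℝ A z := ⟨_, rfl⟩
    have hσ'der : ∀ z ∈ Ω, HasFDerivAt σ' (Φ z) z := by
      intro z hz
      have h1 := hder z hz
      have h2 := hderA z hz
      have hp : HasFDerivAt (fun y => σ y ^ (j + 2))
          ((((j : ℝ) + 2) * σ z ^ (j + 1)) • fderiv ℝ σ z) z := by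
        have := (hasDerivAt_pow (j + 2) (σ z)).comp_hasFDerivAt z h1
        have h3 : ((j : ℕ) + 2 : ℕ) - 1 = j + 1 := by omega
        refine this.congr_fderiv ?_
        rw [h3]; push_cast; rfl
      have hca : HasFDerivAt (fun y => c * A y) (c • fderiv ℝ A z) z := h2.const_mul c
      have hmul := hp.mul hca
      have htot := h1.add hmul
      rw [hσ'def, hΦdef]
      refine htot.congr_fderiv ?_
      ext v
      simp only [ContinuousLinearMap.add_apply, ContinuousLinearMap.smul_apply,
        ContinuousLinearMap.coe_smul', Pi.smul_apply, smul_eq_mul]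
      ring
    have hΦx : fderiv ℝ σ' x = Φ x := (hσ'der x hx).fderiv
    have hev : fderiv ℝ σ' =ᶠ[nhds x] Φ :=
      Filter.eventuallyEq_of_mem hmem fun z hz => (hσ'der z hz).fderiv
    -- second derivative pieces
    have hcdσ : ContDiffAt ℝ (⊤ : ℕ∞) σ x := (hσ x hx).contDiffAt hmem
    have hcdA : ContDiffAt ℝ (⊤ : ℕ∞) A x := (hA x hx).contDiffAt hmem
    have hDσdiff : HasFDerivAt (fderiv ℝ σ) (fderiv ℝ (fderiv ℝ σ) x) x :=
      (((hcdσ.fderiv_right (m := (⊤ : ℕ∞)) (by simp)).differentiableAt (by simp))).hasFDerivAt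
    have hDAdiff : HasFDerivAt (fderiv ℝ A) (fderiv ℝ (fderiv ℝ A) x) x :=
      (((hcdA.fderiv_right (m := (⊤ : ℕ∞)) (by simp)).differentiableAt (by simp))).hasFDerivAt
    have h1x := hder x hx
    have h2x := hderA x hx
    have hpk : HasFDerivAt (fun y => σ y ^ (j + 1))
        ((((j : ℝ) + 1) * σ x ^ j) • fderiv ℝ σ x) x := by
      have := (hasDerivAt_pow (j + 1) (σ x)).comp_hasFDerivAt x h1x
      refine this.congr_fderiv ?_
      rw [Nat.add_sub_cancel]; push_cast; rfl
    have hpk2 : HasFDerivAt (fun y => σ y ^ (j + 2))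
        ((((j : ℝ) + 2) * σ x ^ (j + 1)) • fderiv ℝ σ x) x := by
      have := (hasDerivAt_pow (j + 2) (σ x)).comp_hasFDerivAt x h1x
      refine this.congr_fderiv ?_
      rw [show j + 2 - 1 = j + 1 by omega]; push_cast; rfl
    have hcax : HasFDerivAt (fun y => c * A y) (c • fderiv ℝ A x) x := h2x.const_mul c
    have hg1 := (((hpk.const_mul ((j : ℝ) + 2)).mul hcax).const_add 1)
    have hΨ := ((HasFDerivAt.smul (𝕜' := ℝ) hg1 hDσdiff).add (HasFDerivAt.smul (𝕜' := ℝ) (hpk2.mul_const c) hDAdiff))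
    have hfd2 : fderiv ℝ (fderiv ℝ σ') x = fderiv ℝ Φ x := hev.fderiv_eq
    rw [hΦdef] at hfd2
    replace hfd2 := hfd2.trans hΨ.fderiv
    -- pointwise formulas in coordinates
    have hgradi : ∀ i : Fin d, fderiv ℝ σ' x (EuclideanSpace.single i 1)
        = (1 + ((j : ℝ) + 2) * σ x ^ (j + 1) * (c * A x)) *
            fderiv ℝ σ x (EuclideanSpace.single i 1)
          + (σ x ^ (j + 2) * c) * fderiv ℝ A x (EuclideanSpace.single i 1) := by
      intro i
      rw [hΦx]
      simp only [hΦdef, ContinuousLinearMap.add_apply, ContinuousLinearMap.smul_apply,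
        smul_eq_mul]
    have hlapi : ∀ i : Fin d,
        fderiv ℝ (fderiv ℝ σ') x (EuclideanSpace.single i 1) (EuclideanSpace.single i 1)
        = (1 + ((j : ℝ) + 2) * σ x ^ (j + 1) * (c * A x)) *
            (fderiv ℝ (fderiv ℝ σ) x (EuclideanSpace.single i 1) (EuclideanSpace.single i 1))
          + (((j : ℝ) + 2) * (((j : ℝ) + 1) * σ x ^ j) * (c * A x)) *
            (fderiv ℝ σ x (EuclideanSpace.single i 1)) ^ 2
          + (2 * (((j : ℝ) + 2) * σ x ^ (j + 1) * c)) *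
            (fderiv ℝ σ x (EuclideanSpace.single i 1) * fderiv ℝ A x (EuclideanSpace.single i 1))
          + (σ x ^ (j + 2) * c) *
            (fderiv ℝ (fderiv ℝ A) x (EuclideanSpace.single i 1) (EuclideanSpace.single i 1)) := by
      intro i
      rw [hfd2]
      simp only [ContinuousLinearMap.add_apply, ContinuousLinearMap.smul_apply,
        ContinuousLinearMap.smulRight_apply, ContinuousLinearMap.coe_smul', Pi.smul_apply,
        smul_eq_mul, Pi.mul_apply]
      ring
    -- assemble the two sums
    have hsum1 : ∑ i : Fin d, (fderiv ℝ σ' x (EuclideanSpace.single i 1)) ^ 2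
        = (1 + ((j : ℝ) + 2) * σ x ^ (j + 1) * (c * A x)) ^ 2 * Gf x
          + (2 * (1 + ((j : ℝ) + 2) * σ x ^ (j + 1) * (c * A x)) * (σ x ^ (j + 2) * c)) * Pf x
          + (σ x ^ (j + 2) * c) ^ 2 * Rf x := by
      rw [hGf, hPf, hRf]
      simp only
      rw [Finset.mul_sum, Finset.mul_sum, Finset.mul_sum, ← Finset.sum_add_distrib,
        ← Finset.sum_add_distrib]
      exact Finset.sum_congr rfl fun i _ => by rw [hgradi i]; ring
    have hsum2 : ∑ i : Fin d,
        fderiv ℝ (fderiv ℝ σ') x (EuclideanSpace.single i 1) (EuclideanSpace.single i 1)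
        = (1 + ((j : ℝ) + 2) * σ x ^ (j + 1) * (c * A x)) * Lf x
          + (((j : ℝ) + 2) * (((j : ℝ) + 1) * σ x ^ j) * (c * A x)) * Gf x
          + (2 * (((j : ℝ) + 2) * σ x ^ (j + 1) * c)) * Pf x
          + (σ x ^ (j + 2) * c) * Mf x := by
      rw [hGf, hPf, hLf, hMf]
      simp only
      rw [Finset.mul_sum, Finset.mul_sum, Finset.mul_sum, Finset.mul_sum,
        ← Finset.sum_add_distrib, ← Finset.sum_add_distrib, ← Finset.sum_add_distrib]
      exact Finset.sum_congr rfl fun i _ => by rw [hlapi i]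
    -- the hypothesis at x
    have hS : Gf x - 2 / (d : ℝ) * σ x * Lf x = 1 + σ x ^ (j + 1) * A x := by
      have hh := h x hx
      rw [singularYamabeS, grad_sq_sum, lap_eq_sum] at hh
      rw [hGf, hLf]
      simp only
      convert hh using 2
    -- final algebraic verification
    rw [singularYamabeS, grad_sq_sum, lap_eq_sum, hsum1, hsum2]
    have hσ'x : σ' x = σ x + σ x ^ (j + 2) * (c * A x) := by simp only [hσ'def]
    rw [hσ'x]
    have hGx : Gf x = 1 + σ x ^ (j + 1) * A x + 2 / (d : ℝ) * σ x * Lf x := by linarith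
    have hαc : (2 * ((j : ℝ) + 2) - 2 * ((j : ℝ) + 1) * ((j : ℝ) + 2) / (d : ℝ)) * c = -1 := by
      rw [hcdef]
      field_simp
      ring
    beta_reduce
    rw [hGx]
    linear_combination (σ x * σ x ^ j * A x *
      (1 + σ x ^ (j + 1) * A x + 2 / (d : ℝ) * σ x * Lf x)) * hαc
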